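/- Let H(ℓ, r) be the disjoint union of two cliques of sizes ℓ and r with unit edge weights. The minimum hierarchical clustering cost of H(ℓ, r) is C(ℓ, r) = (ℓ³ − ℓ)/3 + (r³ − r)/3, achieved by first splitting into the two cliques. -/

import Mathlib

open Finset

/-- A rooted binary tree whose leaves are labeled by elements of `Fin n`. -/
inductive HTree (n : ℕ) : Type where
  | leaf : Fin n → HTree n
  | node : HTree n → HTree n → HTree n

namespace HTree

variable {n : ℕ}

/-- The list of leaf labels, left to right. -/
def leafList : HTree n → List (Fin n)
  | .leaf v => [v]
  | .node l r => l.leafList ++ r.leafList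

/-- The set of leaf labels of a tree. -/
def leaves (T : HTree n) : Finset (Fin n) := T.leafList.toFinset

/-- `T` is a hierarchical clustering tree of the whole vertex set `Fin n`:
its leaves are in one-to-one correspondence with `Fin n`. -/
def IsFullTree (T : HTree n) : Prop := T.leafList.Nodup ∧ T.leaves = Finset.univ

/-- `|leaves(T[i ∨ j])|`: the number of leaves of the subtree rooted at the
lowest common ancestor of leaves `i` and `j`. -/
def lcaSize : HTree n → Fin n → Fin n → ℕ
  | .leaf _, _, _ => 1
  | .node l r, i, j =>
    if i ∈ l.leaves ∧ j ∈ l.leaves then l.lcaSize i j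
    else if i ∈ r.leaves ∧ j ∈ r.leaves then r.lcaSize i j
    else (l.leaves ∪ r.leaves).card

/-- `cost_G(T) = Σ_{{i,j}} w_{ij} |leaves(T[i ∨ j])|`, the sum being over
unordered pairs (represented as ordered pairs `p.1 < p.2`). -/
def pairCost (w : Fin n → Fin n → ℝ) (T : HTree n) : ℝ :=
  ∑ p ∈ Finset.univ.filter (fun p : Fin n × Fin n => p.1 < p.2),
    w p.1 p.2 * (T.lcaSize p.1 p.2 : ℝ)

/-- `w(A, B)`: total weight of edges between `A` and `B`. -/
def cut (w : Fin n → Fin n → ℝ) (A B : Finset (Fin n)) : ℝ :=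
  ∑ i ∈ A, ∑ j ∈ B, w i j

/-- The sum-of-splits formulation of the cost:
`Σ over internal splits S → (S₁,S₂) of |S| ⬝ w(S₁,S₂)`. -/
def splitCost (w : Fin n → Fin n → ℝ) : HTree n → ℝ
  | .leaf _ => 0
  | .node l r =>
      ((l.leaves ∪ r.leaves).card : ℝ) * cut w l.leaves r.leaves
        + splitCost w l + splitCost w r

/-- `Subtree t T`: `t` occurs as a subtree of `T`. -/
inductive Subtree : HTree n → HTree n → Prop
  | refl (t : HTree n) : Subtree t t
  | left {t l r : HTree n} : Subtree t l → Subtree t (.node l r)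
  | right {t l r : HTree n} : Subtree t r → Subtree t (.node l r)

end HTree

namespace TwoCliquesAux
open HTree
variable {n : ℕ}

noncomputable def f (k : ℕ) : ℝ := ((k : ℝ) ^ 3 - k) / 3

lemma f_add (a b : ℕ) : f (a + b) = f a + f b + (a * b : ℕ) * ((a + b : ℕ) : ℝ) := by
  simp only [f]; push_cast; ring

/-- unordered pairs from `A`, as ordered pairs with `p.1 < p.2` -/
def pairs (A : Finset (Fin n)) : Finset (Fin n × Fin n) :=
  (A ×ˢ A).filter (fun p => p.1 < p.2)

lemma mem_pairs {A : Finset (Fin n)} {p : Fin n × Fin n} :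
    p ∈ pairs A ↔ p.1 ∈ A ∧ p.2 ∈ A ∧ p.1 < p.2 := by
  simp [pairs, and_assoc]

def cross (U V : Finset (Fin n)) : Finset (Fin n × Fin n) :=
  ((U ×ˢ V) ∪ (V ×ˢ U)).filter (fun p => p.1 < p.2)

lemma mem_cross {U V : Finset (Fin n)} {p : Fin n × Fin n} :
    p ∈ cross U V ↔ ((p.1 ∈ U ∧ p.2 ∈ V) ∨ (p.1 ∈ V ∧ p.2 ∈ U)) ∧ p.1 < p.2 := by
  simp [cross]

lemma pairs_union {U V : Finset (Fin n)} :
    pairs (U ∪ V) = pairs U ∪ pairs V ∪ cross U V := by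
  ext p
  simp only [mem_pairs, mem_union, mem_cross]
  tauto

lemma disj1 {U V : Finset (Fin n)} (h : Disjoint U V) :
    Disjoint (pairs U) (pairs V) := by
  rw [Finset.disjoint_left]
  intro p hp hq
  exact (Finset.disjoint_left.mp h (mem_pairs.mp hp).1) (mem_pairs.mp hq).1

lemma disj2 {U V : Finset (Fin n)} (h : Disjoint U V) :
    Disjoint (pairs U ∪ pairs V) (cross U V) := by
  rw [Finset.disjoint_left]
  intro p hp hq
  rcases mem_cross.mp hq with ⟨hc, -⟩
  rcases Finset.mem_union.mp hp with hU | hV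
  · rcases mem_pairs.mp hU with ⟨h1, h2, -⟩
    rcases hc with ⟨-, h4⟩ | ⟨h3, -⟩
    · exact Finset.disjoint_left.mp h h2 h4
    · exact Finset.disjoint_left.mp h h1 h3
  · rcases mem_pairs.mp hV with ⟨h1, h2, -⟩
    rcases hc with ⟨h3, -⟩ | ⟨-, h4⟩
    · exact Finset.disjoint_left.mp h h3 h1
    · exact Finset.disjoint_left.mp h h4 h2

lemma card_cross {U V : Finset (Fin n)} (h : Disjoint U V) :
    (cross U V).card = U.card * V.card := by
  have hsplit : cross U V = (U ×ˢ V).filter (fun p => p.1 < p.2) ∪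
      (V ×ˢ U).filter (fun p => p.1 < p.2) := by
    simp [cross, Finset.filter_union]
  have hd : Disjoint ((U ×ˢ V).filter (fun p => p.1 < p.2))
      ((V ×ˢ U).filter (fun p => p.1 < p.2)) := by
    rw [Finset.disjoint_left]
    intro p hp hq
    simp only [Finset.mem_filter, Finset.mem_product] at hp hq
    exact Finset.disjoint_left.mp h hp.1.1 hq.1.1
  have hb : ((V ×ˢ U).filter (fun p => p.1 < p.2)).card
      = ((U ×ˢ V).filter (fun p => ¬ p.1 < p.2)).card := by
    apply Finset.card_bij (fun p _ => (p.2, p.1))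
    · intro p hp
      simp only [Finset.mem_filter, Finset.mem_product] at hp ⊢
      exact ⟨⟨hp.1.2, hp.1.1⟩, not_lt.mpr (le_of_lt hp.2)⟩
    · intro p hp q hq hpq
      simp only [Prod.mk.injEq] at hpq
      exact Prod.ext hpq.2 hpq.1
    · intro p hp
      simp only [Finset.mem_filter, Finset.mem_product] at hp
      refine ⟨(p.2, p.1), ?_, rfl⟩
      simp only [Finset.mem_filter, Finset.mem_product]
      have hne : p.2 ≠ p.1 := by
        intro he
        exact Finset.disjoint_left.mp h hp.1.1 (he ▸ hp.1.2)
      exact ⟨⟨hp.1.2, hp.1.1⟩, lt_of_le_of_ne (not_lt.mp hp.2) hne⟩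
  rw [hsplit, Finset.card_union_of_disjoint hd, hb,
    Finset.card_filter_add_card_filter_not (p := fun p : Fin n × Fin n => p.1 < p.2),
    Finset.card_product]

lemma leaves_node (l r : HTree n) : (HTree.node l r).leaves = l.leaves ∪ r.leaves := by
  simp [leaves, leafList]

lemma nodup_node {l r : HTree n} (h : (HTree.node l r).leafList.Nodup) :
    l.leafList.Nodup ∧ r.leafList.Nodup ∧ Disjoint l.leaves r.leaves := by
  rw [leafList, List.nodup_append] at h
  refine ⟨h.1, h.2.1, ?_⟩
  rw [Finset.disjoint_left]
  intro a ha hb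
  exact h.2.2 a (List.mem_toFinset.mp ha) a (List.mem_toFinset.mp hb) rfl

lemma leaves_nonempty (t : HTree n) : t.leaves.Nonempty := by
  induction t with
  | leaf v => exact ⟨v, by simp [leaves, leafList]⟩
  | node l r ihl ihr =>
    rcases ihl with ⟨x, hx⟩
    exact ⟨x, by rw [leaves_node]; exact Finset.mem_union_left _ hx⟩


lemma sum_pairs_node (l r : HTree n) (hd : Disjoint l.leaves r.leaves)
    (U V : Finset (Fin n)) (hU : U ⊆ l.leaves) (hV : V ⊆ r.leaves) :
    ∑ p ∈ pairs (U ∪ V), ((HTree.node l r).lcaSize p.1 p.2 : ℝ)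
      = ∑ p ∈ pairs U, (l.lcaSize p.1 p.2 : ℝ) + ∑ p ∈ pairs V, (r.lcaSize p.1 p.2 : ℝ)
        + ((U.card * V.card : ℕ) : ℝ) * (((l.leaves ∪ r.leaves).card : ℕ) : ℝ) := by
  have hUV : Disjoint U V := hd.mono hU hV
  rw [pairs_union, Finset.sum_union (disj2 hUV), Finset.sum_union (disj1 hUV)]
  congr 1
  · congr 1
    · apply Finset.sum_congr rfl
      intro p hp
      rcases mem_pairs.mp hp with ⟨h1, h2, -⟩
      rw [lcaSize, if_pos ⟨hU h1, hU h2⟩]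
    · apply Finset.sum_congr rfl
      intro p hp
      rcases mem_pairs.mp hp with ⟨h1, h2, -⟩
      rw [lcaSize, if_neg (fun hc => Finset.disjoint_left.mp hd hc.2 (hV h2)),
        if_pos ⟨hV h1, hV h2⟩]
  · rw [Finset.sum_congr rfl
      (g := fun p => (((l.leaves ∪ r.leaves).card : ℕ) : ℝ)) (fun p hp => ?_),
      Finset.sum_const, card_cross hUV, nsmul_eq_mul]
    rcases mem_cross.mp hp with ⟨⟨h1, h2⟩ | ⟨h1, h2⟩, -⟩
    · rw [lcaSize, if_neg (fun hc => Finset.disjoint_left.mp hd hc.2 (hV h2)),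
        if_neg (fun hc => Finset.disjoint_left.mp hd (hU h1) hc.1)]
    · rw [lcaSize, if_neg (fun hc => Finset.disjoint_left.mp hd hc.1 (hV h1)),
        if_neg (fun hc => Finset.disjoint_left.mp hd (hU h2) hc.2)]

lemma pairs_small {S : Finset (Fin n)} (h : S.card ≤ 1) : pairs S = ∅ := by
  ext p
  simp only [mem_pairs, Finset.notMem_empty, iff_false]
  rintro ⟨h1, h2, h3⟩
  have : p.1 = p.2 := Finset.card_le_one.mp h _ h1 _ h2
  exact absurd (this ▸ h3) (lt_irrefl _)

lemma f_zero : f 0 = 0 := by norm_num [f]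
lemma f_one : f 1 = 0 := by norm_num [f]

lemma sum_pairs_eq (t : HTree n) (ht : t.leafList.Nodup) :
    ∑ p ∈ pairs t.leaves, (t.lcaSize p.1 p.2 : ℝ) = f t.leaves.card := by
  induction t with
  | leaf v =>
    have hle : (leaves (HTree.leaf v)).card ≤ 1 := by simp [leaves, leafList]
    rw [pairs_small hle, Finset.sum_empty]
    have : (leaves (HTree.leaf (n := n) v)).card = 1 := by simp [leaves, leafList]
    rw [this, f_one]
  | node l r ihl ihr =>
    obtain ⟨hl, hr, hd⟩ := nodup_node ht
    rw [leaves_node,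
      sum_pairs_node l r hd _ _ (Finset.Subset.refl _) (Finset.Subset.refl _),
      ihl hl, ihr hr, Finset.card_union_of_disjoint hd, f_add]

lemma sum_pairs_le (t : HTree n) (ht : t.leafList.Nodup) (A : Finset (Fin n)) :
    f ((A ∩ t.leaves).card) ≤ ∑ p ∈ pairs (A ∩ t.leaves), (t.lcaSize p.1 p.2 : ℝ) := by
  induction t with
  | leaf v =>
    have hle : (A ∩ leaves (HTree.leaf v)).card ≤ 1 := by
      refine le_trans (Finset.card_le_card Finset.inter_subset_right) ?_
      simp [leaves, leafList]
    rw [pairs_small hle, Finset.sum_empty]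
    interval_cases h : (A ∩ leaves (HTree.leaf (n := n) v)).card
    · rw [f_zero]
    · rw [f_one]
  | node l r ihl ihr =>
    obtain ⟨hl, hr, hd⟩ := nodup_node ht
    have hdAB : Disjoint (A ∩ l.leaves) (A ∩ r.leaves) :=
      hd.mono Finset.inter_subset_right Finset.inter_subset_right
    rw [leaves_node, Finset.inter_union_distrib_left,
      sum_pairs_node l r hd _ _ Finset.inter_subset_right Finset.inter_subset_right,
      Finset.card_union_of_disjoint hdAB, f_add]
    have hcard : (A ∩ l.leaves).card + (A ∩ r.leaves).card ≤ (l.leaves ∪ r.leaves).card := by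
      rw [← Finset.card_union_of_disjoint hdAB]
      exact Finset.card_le_card
        (Finset.union_subset_union Finset.inter_subset_right Finset.inter_subset_right)
    refine add_le_add (add_le_add (ihl hl) (ihr hr)) ?_
    refine mul_le_mul_of_nonneg_left ?_ (by positivity)
    exact_mod_cast hcard


lemma pairCost_decomp (ℓ r : ℕ) (T : HTree (ℓ + r)) :
    T.pairCost (fun i j =>
        if i ≠ j ∧ ((i.val < ℓ ∧ j.val < ℓ) ∨ (ℓ ≤ i.val ∧ ℓ ≤ j.val)) then 1 else 0)
      = ∑ p ∈ pairs (Finset.univ.filter (fun i : Fin (ℓ + r) => i.val < ℓ)),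
          (T.lcaSize p.1 p.2 : ℝ)
        + ∑ p ∈ pairs (Finset.univ.filter (fun i : Fin (ℓ + r) => ℓ ≤ i.val)),
          (T.lcaSize p.1 p.2 : ℝ) := by
  set A := Finset.univ.filter (fun i : Fin (ℓ + r) => i.val < ℓ) with hA
  set B := Finset.univ.filter (fun i : Fin (ℓ + r) => ℓ ≤ i.val) with hB
  have hmA : ∀ i : Fin (ℓ + r), i ∈ A ↔ i.val < ℓ := by
    intro i; simp [hA]
  have hmB : ∀ i : Fin (ℓ + r), i ∈ B ↔ ℓ ≤ i.val := by
    intro i; simp [hB]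
  have hAB : Disjoint A B := by
    rw [Finset.disjoint_left]
    intro i hi hj
    rw [hmA] at hi; rw [hmB] at hj; omega
  rw [pairCost]
  have hsub : pairs A ∪ pairs B ⊆
      Finset.univ.filter (fun p : Fin (ℓ + r) × Fin (ℓ + r) => p.1 < p.2) := by
    intro p hp
    rcases Finset.mem_union.mp hp with h | h <;>
      exact Finset.mem_filter.mpr ⟨Finset.mem_univ _, (mem_pairs.mp h).2.2⟩
  rw [← Finset.sum_subset hsub ?hzero]
  · rw [Finset.sum_union (disj1 hAB)]
    congr 1
    · apply Finset.sum_congr rfl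
      intro p hp
      rcases mem_pairs.mp hp with ⟨h1, h2, h3⟩
      rw [if_pos ⟨ne_of_lt h3, Or.inl ⟨(hmA _).mp h1, (hmA _).mp h2⟩⟩, one_mul]
    · apply Finset.sum_congr rfl
      intro p hp
      rcases mem_pairs.mp hp with ⟨h1, h2, h3⟩
      rw [if_pos ⟨ne_of_lt h3, Or.inr ⟨(hmB _).mp h1, (hmB _).mp h2⟩⟩, one_mul]
  case hzero =>
    intro p hp hnp
    have h3 : p.1 < p.2 := (Finset.mem_filter.mp hp).2
    rw [if_neg, zero_mul]
    rintro ⟨-, ⟨c1, c2⟩ | ⟨c1, c2⟩⟩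
    · exact hnp (Finset.mem_union_left _
        (mem_pairs.mpr ⟨(hmA _).mpr c1, (hmA _).mpr c2, h3⟩))
    · exact hnp (Finset.mem_union_right _
        (mem_pairs.mpr ⟨(hmB _).mpr c1, (hmB _).mpr c2, h3⟩))

lemma card_A (ℓ r : ℕ) :
    (Finset.univ.filter (fun i : Fin (ℓ + r) => i.val < ℓ)).card = ℓ := by
  rw [Finset.card_filter, Fin.sum_univ_eq_sum_range (fun k => if k < ℓ then 1 else 0),
    ← Finset.card_filter]
  have h : (Finset.range (ℓ + r)).filter (fun k => k < ℓ) = Finset.range ℓ := by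
    ext k; simp only [Finset.mem_filter, Finset.mem_range]; omega
  rw [h, Finset.card_range]

lemma card_B (ℓ r : ℕ) :
    (Finset.univ.filter (fun i : Fin (ℓ + r) => ℓ ≤ i.val)).card = r := by
  have h : (Finset.univ.filter (fun i : Fin (ℓ + r) => ℓ ≤ i.val))
      = Finset.univ.filter (fun i : Fin (ℓ + r) => ¬ i.val < ℓ) := by
    apply Finset.filter_congr
    intro i _
    simp [not_lt]
  have h2 := Finset.card_filter_add_card_filter_not (s := (Finset.univ : Finset (Fin (ℓ + r))))
    (p := fun i : Fin (ℓ + r) => i.val < ℓ)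
  have h3 := card_A ℓ r
  rw [h]
  simp only [Finset.card_univ, Fintype.card_fin] at h2
  omega


def ofList (d : Fin n) : List (Fin n) → HTree n
  | [] => .leaf d
  | [x] => .leaf x
  | x :: y :: ys => .node (.leaf x) (ofList d (y :: ys))

lemma leafList_ofList (d : Fin n) : ∀ l : List (Fin n), l ≠ [] → (ofList d l).leafList = l
  | [], h => absurd rfl h
  | [x], _ => by simp [ofList, leafList]
  | x :: y :: ys, _ => by
    rw [ofList, leafList, leafList_ofList d (y :: ys) (by simp)]
    rfl

end TwoCliquesAux

open TwoCliquesAux in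
/-- `H(ℓ,r)`, the disjoint union of two unit-weight cliques of sizes `ℓ` and `r`
(on vertex set `Fin (ℓ+r)`, the first clique being `{i : i < ℓ}`), has minimum
hierarchical clustering cost `C(ℓ,r) = (ℓ³-ℓ)/3 + (r³-r)/3`; this is achieved
exactly by any tree whose top split separates the two cliques. -/
theorem two_cliques_optimal_cost (ℓ r : ℕ) (hl : 0 < ℓ) (hr : 0 < r) :
    (∀ T : HTree (ℓ + r), T.IsFullTree →
        (((ℓ : ℝ) ^ 3 - ℓ) / 3 + ((r : ℝ) ^ 3 - r) / 3) ≤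
          T.pairCost (fun i j =>
            if i ≠ j ∧ ((i.val < ℓ ∧ j.val < ℓ) ∨ (ℓ ≤ i.val ∧ ℓ ≤ j.val)) then 1 else 0)) ∧
    (∀ Tl Tr : HTree (ℓ + r), (HTree.node Tl Tr).IsFullTree →
        Tl.leaves = Finset.univ.filter (fun i : Fin (ℓ + r) => i.val < ℓ) →
        (HTree.node Tl Tr).pairCost (fun i j =>
            if i ≠ j ∧ ((i.val < ℓ ∧ j.val < ℓ) ∨ (ℓ ≤ i.val ∧ ℓ ≤ j.val)) then 1 else 0)
          = ((ℓ : ℝ) ^ 3 - ℓ) / 3 + ((r : ℝ) ^ 3 - r) / 3) ∧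
    (∃ Tl Tr : HTree (ℓ + r), (HTree.node Tl Tr).IsFullTree ∧
        Tl.leaves = Finset.univ.filter (fun i : Fin (ℓ + r) => i.val < ℓ)) := by
  classical
  have hmA : ∀ i : Fin (ℓ + r),
      i ∈ Finset.univ.filter (fun i : Fin (ℓ + r) => i.val < ℓ) ↔ i.val < ℓ := by
    intro i; simp
  have hmB : ∀ i : Fin (ℓ + r),
      i ∈ Finset.univ.filter (fun i : Fin (ℓ + r) => ℓ ≤ i.val) ↔ ℓ ≤ i.val := by
    intro i; simp
  set A := Finset.univ.filter (fun i : Fin (ℓ + r) => i.val < ℓ) with hA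
  set B := Finset.univ.filter (fun i : Fin (ℓ + r) => ℓ ≤ i.val) with hB
  have hAB : Disjoint A B := by
    rw [Finset.disjoint_left]
    intro i hi hj
    rw [hmA] at hi; rw [hmB] at hj; omega
  have hABu : A ∪ B = Finset.univ := by
    ext i
    simp only [Finset.mem_union, hmA, hmB, Finset.mem_univ, iff_true]
    omega
  refine ⟨?_, ?_, ?_⟩
  · -- lower bound
    intro T hT
    rw [pairCost_decomp]
    have h1 := sum_pairs_le T hT.1 A
    have h2 := sum_pairs_le T hT.1 B
    rw [hT.2, Finset.inter_univ] at h1 h2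
    rw [hA, card_A] at h1
    rw [hB, card_B] at h2
    exact add_le_add h1 h2
  · -- achieved value
    intro Tl Tr hfull hTl
    obtain ⟨hl, hr, hd⟩ := nodup_node hfull.1
    have hTr : Tr.leaves = B := by
      ext i
      rw [hmB]
      constructor
      · intro hi
        have hni : i ∉ Tl.leaves := fun h => Finset.disjoint_left.mp hd h hi
        rw [hTl] at hni
        exact not_lt.mp (fun hlt => hni ((hmA i).mpr hlt))
      · intro hi
        have hu : i ∈ Tl.leaves ∪ Tr.leaves := by
          rw [← leaves_node, hfull.2]; exact Finset.mem_univ i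
        rcases Finset.mem_union.mp hu with h | h
        · rw [hTl] at h
          have := (hmA i).mp h
          omega
        · exact h
    rw [pairCost_decomp]
    have e1 : ∑ p ∈ pairs A, ((HTree.node Tl Tr).lcaSize p.1 p.2 : ℝ)
        = ∑ p ∈ pairs A, (Tl.lcaSize p.1 p.2 : ℝ) := by
      apply Finset.sum_congr rfl
      intro p hp
      rcases mem_pairs.mp hp with ⟨h1, h2, -⟩
      rw [HTree.lcaSize, if_pos ⟨by rw [hTl]; exact h1, by rw [hTl]; exact h2⟩]
    have e2 : ∑ p ∈ pairs B, ((HTree.node Tl Tr).lcaSize p.1 p.2 : ℝ)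
        = ∑ p ∈ pairs B, (Tr.lcaSize p.1 p.2 : ℝ) := by
      apply Finset.sum_congr rfl
      intro p hp
      rcases mem_pairs.mp hp with ⟨h1, h2, -⟩
      rw [HTree.lcaSize,
        if_neg (fun hc => Finset.disjoint_left.mp hd hc.1 (by rw [hTr]; exact h1)),
        if_pos ⟨by rw [hTr]; exact h1, by rw [hTr]; exact h2⟩]
    have e3 := sum_pairs_eq Tl hl
    have e4 := sum_pairs_eq Tr hr
    rw [hTl] at e3
    rw [hTr] at e4
    rw [hA, card_A] at e3
    rw [hB, card_B] at e4
    rw [e1, e2, e3, e4]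
    simp [f]
  · -- existence
    have hd0 : (0 : ℕ) < ℓ + r := by omega
    set d : Fin (ℓ + r) := ⟨0, hd0⟩ with hdd
    have hAne : A.toList ≠ [] := by
      rw [Ne, Finset.toList_eq_nil]
      exact Finset.ne_empty_of_mem ((hmA d).mpr hl)
    have hBne : B.toList ≠ [] := by
      rw [Ne, Finset.toList_eq_nil]
      exact Finset.ne_empty_of_mem ((hmB ⟨ℓ, by omega⟩).mpr le_rfl)
    have eTl : (ofList d A.toList).leafList = A.toList := leafList_ofList d _ hAne
    have eTr : (ofList d B.toList).leafList = B.toList := leafList_ofList d _ hBne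
    have lTl : (ofList d A.toList).leaves = A := by
      rw [HTree.leaves, eTl, Finset.toList_toFinset]
    have lTr : (ofList d B.toList).leaves = B := by
      rw [HTree.leaves, eTr, Finset.toList_toFinset]
    refine ⟨ofList d A.toList, ofList d B.toList, ⟨?_, ?_⟩, lTl⟩
    · rw [HTree.leafList, eTl, eTr]
      refine List.Nodup.append (Finset.nodup_toList A) (Finset.nodup_toList B) ?_
      intro a ha hb
      exact Finset.disjoint_left.mp hAB (Finset.mem_toList.mp ha) (Finset.mem_toList.mp hb)
    · rw [leaves_node, lTl, lTr, hABu]
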